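/- Let X^Λ be the (2Λ+1)×(2Λ+1) real symmetric tridiagonal matrix with zero diagonal and off-diagonal entries b_n/2 where b_n = √(1 + n(n−1)/k) for n = Λ, Λ−1, …, 1−Λ, and k ≥ Λ²(Λ+1)². Then its largest eigenvalue α₁(Λ) satisfies cos(π/(2Λ+2)) ≤ α₁(Λ) ≤ √(1 + Λ(Λ−1)/k)·cos(π/(2Λ+2)). -/

import Mathlib

/-- `b_m = √(1 + m(m-1)/k)`. -/
noncomputable def bcoef (k : ℝ) (m : ℤ) : ℝ := Real.sqrt (1 + (m * (m - 1)) / k)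

/-- The matrix of the coordinate `x₁` on the fuzzy circle `S¹_Λ`: the
`(2Λ+1) × (2Λ+1)` symmetric tridiagonal matrix with zero diagonal and
off-diagonal entries `b_{Λ-i}/2`. -/
noncomputable def XLam (Λ : ℕ) (k : ℝ) : Matrix (Fin (2*Λ+1)) (Fin (2*Λ+1)) ℝ :=
  fun i j =>
    if (i : ℕ) + 1 = j then bcoef k ((Λ : ℤ) - (i : ℕ)) / 2
    else if (j : ℕ) + 1 = i then bcoef k ((Λ : ℤ) - (j : ℕ)) / 2
    else 0

lemma int_consec_nonneg (m : ℤ) : 0 ≤ m * (m - 1) := by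
  rcases le_or_gt m 0 with h | h
  · nlinarith
  · exact mul_nonneg (by omega) (by omega)

lemma one_le_bcoef {k : ℝ} (hk : 0 < k) (m : ℤ) : 1 ≤ bcoef k m := by
  have h0 : (0:ℝ) ≤ (m : ℝ) * ((m:ℝ) - 1) := by
    have := int_consec_nonneg m
    push_cast at this ⊢
    exact_mod_cast this
  have : (1:ℝ) ≤ 1 + (m : ℝ) * ((m:ℝ) - 1) / k := by
    have : 0 ≤ (m : ℝ) * ((m:ℝ) - 1) / k := div_nonneg h0 hk.le
    linarith
  calc (1:ℝ) = Real.sqrt 1 := Real.sqrt_one.symm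
    _ ≤ _ := Real.sqrt_le_sqrt this

lemma bcoef_nonneg (k : ℝ) (m : ℤ) : 0 ≤ bcoef k m := Real.sqrt_nonneg _

lemma bcoef_le {k : ℝ} (hk : 0 < k) {Λ : ℕ} {m : ℤ}
    (h1 : 1 - (Λ:ℤ) ≤ m) (h2 : m ≤ (Λ:ℤ)) :
    bcoef k m ≤ Real.sqrt (1 + (Λ : ℝ) * ((Λ : ℝ) - 1) / k) := by
  apply Real.sqrt_le_sqrt
  have hint : m * (m - 1) ≤ (Λ:ℤ) * ((Λ:ℤ) - 1) := by nlinarith [mul_nonneg (sub_nonneg.mpr h2) (by omega : (0:ℤ) ≤ m + Λ - 1)]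
  have : (m:ℝ) * ((m:ℝ) - 1) ≤ (Λ : ℝ) * ((Λ : ℝ) - 1) := by exact_mod_cast hint
  gcongr



/-- `S Λ j = sin (j * π/(2Λ+2))`. -/
noncomputable def Ssin (Λ : ℕ) (j : ℕ) : ℝ := Real.sin (j * (Real.pi / (2 * (Λ:ℝ) + 2)))

lemma Ssin_rec (Λ : ℕ) (j : ℕ) :
    Ssin Λ j + Ssin Λ (j+2) = 2 * Real.cos (Real.pi / (2 * (Λ:ℝ) + 2)) * Ssin Λ (j+1) := by
  unfold Ssin
  set θ := Real.pi / (2 * (Λ:ℝ) + 2)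
  have h1 : ((j:ℝ)) * θ = ((j:ℝ)+1) * θ - θ := by ring
  have h2 : ((j:ℝ)+2) * θ = ((j:ℝ)+1) * θ + θ := by ring
  push_cast
  rw [h1, h2, Real.sin_sub, Real.sin_add]
  ring

lemma Ssin_zero (Λ : ℕ) : Ssin Λ 0 = 0 := by simp [Ssin]

lemma Ssin_top (Λ : ℕ) : Ssin Λ (2*Λ+2) = 0 := by
  unfold Ssin
  have h : (2 * (Λ:ℝ) + 2) ≠ 0 := by positivity
  have : ((2*Λ+2 : ℕ) : ℝ) * (Real.pi / (2 * (Λ:ℝ) + 2)) = Real.pi := by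
    push_cast; field_simp
  rw [this, Real.sin_pi]

lemma Ssin_pos (Λ : ℕ) {j : ℕ} (h1 : 1 ≤ j) (h2 : j ≤ 2*Λ+1) : 0 < Ssin Λ j := by
  unfold Ssin
  have hpi := Real.pi_pos
  have hden : (0:ℝ) < 2 * (Λ:ℝ) + 2 := by positivity
  apply Real.sin_pos_of_pos_of_lt_pi
  · have : (1:ℝ) ≤ (j:ℝ) := by exact_mod_cast h1
    positivity
  · have hj : (j:ℝ) < 2 * (Λ:ℝ) + 2 := by
      have : (j:ℝ) ≤ 2*(Λ:ℝ)+1 := by exact_mod_cast h2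
      linarith
    calc (j:ℝ) * (Real.pi / (2 * (Λ:ℝ) + 2)) < (2 * (Λ:ℝ) + 2) * (Real.pi / (2 * (Λ:ℝ) + 2)) := by
          apply mul_lt_mul_of_pos_right hj (by positivity)
      _ = Real.pi := by field_simp

lemma Ssin_nonneg (Λ : ℕ) {j : ℕ} (h2 : j ≤ 2*Λ+2) : 0 ≤ Ssin Λ j := by
  rcases Nat.eq_zero_or_pos j with h | h
  · simp [h, Ssin_zero]
  rcases eq_or_lt_of_le h2 with h' | h'
  · rw [h', Ssin_top]
  · exact (Ssin_pos Λ h (by omega)).le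

lemma cos_theta_pos (Λ : ℕ) (hΛ : 0 < Λ) : 0 < Real.cos (Real.pi / (2 * (Λ:ℝ) + 2)) := by
  have hpi := Real.pi_pos
  apply Real.cos_pos_of_mem_Ioo
  constructor
  · have : (0:ℝ) < Real.pi / (2 * (Λ:ℝ) + 2) := by positivity
    linarith
  · rw [div_lt_div_iff₀ (by positivity) (by norm_num)]
    have : (1:ℝ) ≤ (Λ:ℝ) := by exact_mod_cast hΛ
    nlinarith

/-- extension of a vector on `Fin (2Λ+1)` to `ℕ` by zero. -/
noncomputable def extv (Λ : ℕ) (f : Fin (2*Λ+1) → ℝ) : ℕ → ℝ :=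
  fun i => if h : i < 2*Λ+1 then f ⟨i, h⟩ else 0

lemma extv_def (Λ : ℕ) (f : Fin (2*Λ+1) → ℝ) (i : ℕ) :
    extv Λ f i = if h : i < 2*Λ+1 then f ⟨i, h⟩ else 0 := rfl

lemma extv_coe (Λ : ℕ) (f : Fin (2*Λ+1) → ℝ) (i : Fin (2*Λ+1)) :
    extv Λ f (i : ℕ) = f i := by simp [extv, i.isLt]

lemma mulVec_XLam (Λ : ℕ) (k : ℝ) (f : Fin (2*Λ+1) → ℝ) (j : Fin (2*Λ+1)) :
    (XLam Λ k).mulVec f j =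
      bcoef k ((Λ:ℤ) - (j:ℕ)) / 2 * extv Λ f ((j:ℕ)+1)
      + (if (j:ℕ) = 0 then 0
         else bcoef k ((Λ:ℤ) - ((j:ℕ)-1)) / 2 * extv Λ f ((j:ℕ)-1)) := by
  unfold Matrix.mulVec dotProduct XLam
  have hstep : ∀ i : Fin (2*Λ+1),
      (if (j : ℕ) + 1 = (i:ℕ) then bcoef k ((Λ : ℤ) - (j : ℕ)) / 2
        else if (i : ℕ) + 1 = (j:ℕ) then bcoef k ((Λ : ℤ) - (i : ℕ)) / 2 else 0) * f i
      = (fun i : ℕ => (if i = (j:ℕ)+1 then bcoef k ((Λ : ℤ) - (j : ℕ)) / 2 * extv Λ f i else 0)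
          + (if i = (j:ℕ)-1 ∧ (j:ℕ) ≠ 0 then bcoef k ((Λ : ℤ) - ((j:ℕ)-1)) / 2 * extv Λ f i else 0)) (i:ℕ) := by
    intro i
    simp only [extv_coe]
    rcases eq_or_ne ((j:ℕ)+1) (i:ℕ) with h1 | h1
    · rw [if_pos h1, if_pos h1.symm, if_neg (by omega), add_zero]
    · rw [if_neg h1, if_neg (fun h : (i:ℕ) = (j:ℕ)+1 => h1 h.symm), zero_add]
      rcases eq_or_ne ((i:ℕ)+1) (j:ℕ) with h2 | h2
      · have hcast : ((Λ:ℤ) - ((i:ℕ):ℤ)) = ((Λ:ℤ) - (((j:ℕ):ℤ) - 1)) := by omega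
        rw [if_pos h2, if_pos ⟨by omega, by omega⟩, hcast]
      · rw [if_neg h2, if_neg (by omega), zero_mul]
  rw [Finset.sum_congr rfl (fun i _ => hstep i)]
  rw [Fin.sum_univ_eq_sum_range (fun i : ℕ =>
      (if i = (j:ℕ)+1 then bcoef k ((Λ : ℤ) - (j : ℕ)) / 2 * extv Λ f i else 0)
      + (if i = (j:ℕ)-1 ∧ (j:ℕ) ≠ 0 then bcoef k ((Λ : ℤ) - ((j:ℕ)-1)) / 2 * extv Λ f i else 0))]
  rw [Finset.sum_add_distrib]
  congr 1
  · rw [Finset.sum_ite_eq' (Finset.range (2*Λ+1))]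
    rcases Nat.lt_or_ge ((j:ℕ)+1) (2*Λ+1) with h | h
    · rw [if_pos (Finset.mem_range.mpr h)]
    · rw [if_neg (by simp [Finset.mem_range]; omega)]
      have : extv Λ f ((j:ℕ)+1) = 0 := by simp [extv]; omega
      rw [this, mul_zero]
  · rcases eq_or_ne ((j:ℕ)) 0 with h | h
    · rw [if_pos h]
      apply Finset.sum_eq_zero
      intro i _
      rw [if_neg (by simp [h])]
    · rw [if_neg h]
      have : ∀ i ∈ Finset.range (2*Λ+1),
          (if i = (j:ℕ)-1 ∧ (j:ℕ) ≠ 0 then bcoef k ((Λ : ℤ) - ((j:ℕ)-1)) / 2 * extv Λ f i else 0)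
          = (if i = (j:ℕ)-1 then bcoef k ((Λ : ℤ) - ((j:ℕ)-1)) / 2 * extv Λ f i else 0) := by
        intro i _
        rcases eq_or_ne i ((j:ℕ)-1) with h2 | h2
        · rw [if_pos ⟨h2, h⟩, if_pos h2]
        · rw [if_neg (fun hh => h2 hh.1), if_neg h2]
      rw [Finset.sum_congr rfl this, Finset.sum_ite_eq' (Finset.range (2*Λ+1))]
      rw [if_pos (Finset.mem_range.mpr (by omega))]

lemma XLam_isHermitian (Λ : ℕ) (k : ℝ) : (XLam Λ k).IsHermitian := by
  unfold Matrix.IsHermitian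
  ext i j
  simp only [Matrix.conjTranspose_apply, XLam, star_trivial]
  split_ifs <;> first | rfl | omega

lemma lower_bound (Λ : ℕ) (_hΛ : 0 < Λ) (k : ℝ) (hkpos : 0 < k) (α₁ : ℝ)
    (hα₁ : IsGreatest {α : ℝ | Module.End.HasEigenvalue (Matrix.toLin' (XLam Λ k)) α} α₁) :
    Real.cos (Real.pi / (2 * (Λ:ℝ) + 2)) ≤ α₁ := by
  set c := Real.cos (Real.pi / (2 * (Λ:ℝ) + 2)) with hc
  set M := XLam Λ k with hM
  set E := EuclideanSpace ℝ (Fin (2*Λ+1)) with hE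
  set T : E →ₗ[ℝ] E := Matrix.toEuclideanLin M with hT
  have hsym : T.IsSymmetric := Matrix.isHermitian_iff_isSymmetric.mp (XLam_isHermitian Λ k)
  haveI : Nontrivial E := (WithLp.equiv 2 (Fin (2*Λ+1) → ℝ)).nontrivial
  set μ : ℝ := ⨆ x : { x : E // x ≠ 0 }, RCLike.re (inner ℝ (T x) (x : E) : ℝ) / ‖(x : E)‖ ^ 2 with hμ
  have hEig : Module.End.HasEigenvalue T μ := by
    have := hsym.hasEigenvalue_iSup_of_finiteDimensional
    simpa [hμ] using this
  -- transfer the eigenvalue to toLin'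
  have hμα : μ ≤ α₁ := by
    apply hα₁.2
    obtain ⟨w0, hmem, hne⟩ := hEig.exists_hasEigenvector
    have happ : T w0 = μ • w0 := Module.End.mem_eigenspace_iff.mp hmem
    set w0' : Fin (2*Λ+1) → ℝ := WithLp.equiv 2 _ w0 with hw0'
    have happ' : Matrix.toLin' M w0' = μ • w0' := by
      have := congrArg (WithLp.equiv 2 (Fin (2*Λ+1) → ℝ)) happ
      exact this
    have hne' : w0' ≠ 0 := by
      intro h
      apply hne
      have := congrArg (WithLp.equiv 2 (Fin (2*Λ+1) → ℝ)).symm h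
      rw [Equiv.symm_apply_apply] at this; exact this
    exact Module.End.hasEigenvalue_of_hasEigenvector
      ⟨Module.End.mem_eigenspace_iff.mpr happ', hne'⟩
  -- the comparison vector
  set wfun : Fin (2*Λ+1) → ℝ := fun j => Ssin Λ ((j:ℕ)+1) with hwfun
  set wE : E := (WithLp.equiv 2 (Fin (2*Λ+1) → ℝ)).symm wfun with hwE
  have hwfun_nonneg : ∀ j : Fin (2*Λ+1), 0 ≤ wfun j := fun j =>
    (Ssin_pos Λ (by omega) (by omega)).le
  have hw0 : wE ≠ 0 := by
    intro h
    have h0 : wfun 0 = 0 := by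
      have := congrArg (fun x => WithLp.equiv 2 (Fin (2*Λ+1) → ℝ) x 0) h
      simpa [hwE] using this
    have : (0:ℝ) < wfun 0 := Ssin_pos Λ (by omega) (by omega)
    linarith
  -- key pointwise inequality
  have hext1 : ∀ j : Fin (2*Λ+1), extv Λ wfun ((j:ℕ)+1) = Ssin Λ ((j:ℕ)+2) := by
    intro j
    rcases Nat.lt_or_ge ((j:ℕ)+1) (2*Λ+1) with h | h
    · rw [extv_def, dif_pos h]
    · rw [extv_def, dif_neg (by omega)]
      have h2 : (j:ℕ)+2 = 2*Λ+2 := by omega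
      rw [h2, Ssin_top]
  have hkey : ∀ j : Fin (2*Λ+1), c * (wfun j * wfun j) ≤ (M.mulVec wfun) j * wfun j := by
    intro j
    have h1 : c * wfun j ≤ M.mulVec wfun j := by
      rw [mulVec_XLam, hext1]
      have hb1 : 1 ≤ bcoef k ((Λ:ℤ) - (j:ℕ)) := one_le_bcoef hkpos _
      have hs2 : 0 ≤ Ssin Λ ((j:ℕ)+2) := Ssin_nonneg Λ (by omega)
      have ht1 : Ssin Λ ((j:ℕ)+2) / 2 ≤ bcoef k ((Λ:ℤ) - (j:ℕ)) / 2 * Ssin Λ ((j:ℕ)+2) := by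
        nlinarith
      have ht2 : Ssin Λ (j:ℕ) / 2 ≤ (if (j:ℕ) = 0 then (0:ℝ)
          else bcoef k ((Λ:ℤ) - ((j:ℕ)-1)) / 2 * extv Λ wfun ((j:ℕ)-1)) := by
        rcases eq_or_ne ((j:ℕ)) 0 with h | h
        · rw [if_pos h, h, Ssin_zero]; norm_num
        · rw [if_neg h]
          have hlt : (j:ℕ)-1 < 2*Λ+1 := by omega
          have hext2 : extv Λ wfun ((j:ℕ)-1) = Ssin Λ (j:ℕ) := by
            rw [extv_def, dif_pos hlt]
            show Ssin Λ (((j:ℕ)-1)+1) = _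
            congr 1
            omega
          rw [hext2]
          have hb2 : 1 ≤ bcoef k ((Λ:ℤ) - ((j:ℕ)-1)) := one_le_bcoef hkpos _
          have hs0 : 0 ≤ Ssin Λ (j:ℕ) := Ssin_nonneg Λ (by omega)
          nlinarith
      have hrec := Ssin_rec Λ (j:ℕ)
      have : c * wfun j = (Ssin Λ (j:ℕ) + Ssin Λ ((j:ℕ)+2)) / 2 := by
        rw [hwfun]
        simp only
        linarith [hrec]
      rw [this]
      have := add_le_add ht1 ht2
      linarith
    rw [← mul_assoc]
    exact mul_le_mul_of_nonneg_right h1 (hwfun_nonneg j)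
  -- assemble the Rayleigh quotient bound
  have hTwE : ∀ j : Fin (2*Λ+1), (T wE) j = M.mulVec wfun j := by
    intro j
    rw [hwE, hT]
    rfl
  have hinner : (inner ℝ (T wE) wE : ℝ) = ∑ j : Fin (2*Λ+1), M.mulVec wfun j * wfun j := by
    rw [PiLp.inner_apply]
    apply Finset.sum_congr rfl
    intro j _
    rw [hTwE j]
    simp [hwE, mul_comm]
  have hnorm : ‖wE‖ ^ 2 = ∑ j : Fin (2*Λ+1), wfun j * wfun j := by
    rw [← real_inner_self_eq_norm_sq, PiLp.inner_apply]
    apply Finset.sum_congr rfl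
    intro j _
    simp [hwE, sq]
  have hsumpos : 0 < ∑ j : Fin (2*Λ+1), wfun j * wfun j := by
    apply Finset.sum_pos'
    · intro j _
      exact mul_nonneg (hwfun_nonneg j) (hwfun_nonneg j)
    · refine ⟨0, Finset.mem_univ 0, ?_⟩
      have : (0:ℝ) < wfun 0 := Ssin_pos Λ (by omega) (by omega)
      nlinarith
  have hray : c ≤ RCLike.re (inner ℝ (T wE) wE : ℝ) / ‖wE‖ ^ 2 := by
    rw [RCLike.re_to_real, hinner, hnorm, le_div_iff₀ hsumpos]
    rw [Finset.mul_sum]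
    exact Finset.sum_le_sum (fun j _ => hkey j)
  -- boundedness of the Rayleigh quotient
  have hbdd : BddAbove (Set.range fun x : { x : E // x ≠ 0 } =>
      RCLike.re (inner ℝ (T x) (x : E) : ℝ) / ‖(x : E)‖ ^ 2) := by
    set T' : E →L[ℝ] E := LinearMap.toContinuousLinearMap T with hT'
    refine ⟨‖T'‖, ?_⟩
    rintro y ⟨x, rfl⟩
    dsimp only
    have hx : 0 < ‖(x:E)‖ := norm_pos_iff.mpr x.2
    have h1 : (inner ℝ (T x) (x : E) : ℝ) ≤ ‖T (x:E)‖ * ‖(x:E)‖ := real_inner_le_norm _ _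
    have h2 : ‖T (x:E)‖ ≤ ‖T'‖ * ‖(x:E)‖ := by
      have := T'.le_opNorm (x:E)
      simpa [hT'] using this
    rw [RCLike.re_to_real]
    rw [div_le_iff₀ (by positivity)]
    calc (inner ℝ (T x) (x : E) : ℝ) ≤ ‖T (x:E)‖ * ‖(x:E)‖ := h1
      _ ≤ ‖T'‖ * ‖(x:E)‖ * ‖(x:E)‖ := by nlinarith [norm_nonneg (T (x:E))]
      _ = ‖T'‖ * ‖(x:E)‖ ^ 2 := by ring
  have hcμ : c ≤ μ := le_trans hray (le_ciSup hbdd ⟨wE, hw0⟩)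
  linarith

lemma upper_bound (Λ : ℕ) (hΛ : 0 < Λ) (k : ℝ) (hkpos : 0 < k) (α : ℝ)
    (hα : Module.End.HasEigenvalue (Matrix.toLin' (XLam Λ k)) α) :
    α ≤ Real.sqrt (1 + (Λ : ℝ) * ((Λ : ℝ) - 1) / k) * Real.cos (Real.pi / (2 * (Λ:ℝ) + 2)) := by
  set B := Real.sqrt (1 + (Λ : ℝ) * ((Λ : ℝ) - 1) / k) with hB
  set c := Real.cos (Real.pi / (2 * (Λ:ℝ) + 2)) with hc
  have hBpos : (0:ℝ) < B := lt_of_lt_of_le one_pos (by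
    have := one_le_bcoef hkpos (Λ:ℤ)
    have h2 : bcoef k (Λ:ℤ) ≤ B := by
      apply bcoef_le hkpos (by omega) le_rfl
    linarith)
  have hcpos := cos_theta_pos Λ hΛ
  obtain ⟨v, hvmem, hv0⟩ := hα.exists_hasEigenvector
  have hmv : (XLam Λ k).mulVec v = α • v := by
    have := Module.End.mem_eigenspace_iff.mp hvmem
    rwa [Matrix.toLin'_apply] at this
  -- weight vector
  set W : Fin (2*Λ+1) → ℝ := fun j => Ssin Λ ((j:ℕ)+1) with hW
  have hWpos : ∀ j : Fin (2*Λ+1), 0 < W j := fun j =>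
    Ssin_pos Λ (by omega) (by omega)
  obtain ⟨j₀, -, hj₀⟩ := Finset.exists_max_image Finset.univ
    (fun j : Fin (2*Λ+1) => |v j| / W j) ⟨0, Finset.mem_univ 0⟩
  set r := |v j₀| / W j₀ with hr
  have hle : ∀ j : Fin (2*Λ+1), |v j| ≤ r * W j := by
    intro j
    have := hj₀ j (Finset.mem_univ j)
    rwa [div_le_iff₀ (hWpos j)] at this
  have hrpos : 0 < r := by
    obtain ⟨i0, hi0⟩ := Function.ne_iff.mp hv0
    have h1 : 0 < |v i0| := abs_pos.mpr hi0
    have h2 := hj₀ i0 (Finset.mem_univ i0)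
    have h3 : 0 < |v i0| / W i0 := div_pos h1 (hWpos i0)
    exact lt_of_lt_of_le h3 h2
  have hvj₀ : |v j₀| = r * W j₀ := by
    rw [hr, div_mul_cancel₀ _ (hWpos j₀).ne']
  have hvj₀pos : 0 < |v j₀| := by
    rw [hvj₀]; exact mul_pos hrpos (hWpos j₀)
  -- eigen-equation at j₀
  have heq : α * v j₀ = (XLam Λ k).mulVec v j₀ := by
    rw [hmv]; simp
  -- bound the two terms
  have hA1 : |bcoef k ((Λ:ℤ) - (j₀:ℕ)) / 2 * extv Λ v ((j₀:ℕ)+1)|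
      ≤ B / 2 * (r * Ssin Λ ((j₀:ℕ)+2)) := by
    rcases Nat.lt_or_ge ((j₀:ℕ)+1) (2*Λ+1) with h | h
    · have hext : extv Λ v ((j₀:ℕ)+1) = v ⟨(j₀:ℕ)+1, h⟩ := by
        rw [extv_def, dif_pos h]
      rw [hext, abs_mul,
        abs_of_nonneg (div_nonneg (bcoef_nonneg k _) (by norm_num) : (0:ℝ) ≤ bcoef k ((Λ:ℤ) - (j₀:ℕ)) / 2)]
      have hb : bcoef k ((Λ:ℤ) - (j₀:ℕ)) ≤ B := bcoef_le hkpos (by omega) (by omega)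
      have hv' : |v ⟨(j₀:ℕ)+1, h⟩| ≤ r * Ssin Λ ((j₀:ℕ)+2) := by
        have := hle ⟨(j₀:ℕ)+1, h⟩
        simpa [hW] using this
      exact mul_le_mul (by linarith) hv' (abs_nonneg _) (by linarith)
    · have hext : extv Λ v ((j₀:ℕ)+1) = 0 := by
        rw [extv_def, dif_neg (by omega)]
      rw [hext, mul_zero, abs_zero]
      have h1 : 0 ≤ Ssin Λ ((j₀:ℕ)+2) := Ssin_nonneg Λ (by omega)
      have h2 : 0 ≤ r * Ssin Λ ((j₀:ℕ)+2) := mul_nonneg hrpos.le h1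
      nlinarith
  have hA2 : |(if (j₀:ℕ) = 0 then (0:ℝ)
         else bcoef k ((Λ:ℤ) - ((j₀:ℕ)-1)) / 2 * extv Λ v ((j₀:ℕ)-1))|
      ≤ B / 2 * (r * Ssin Λ (j₀:ℕ)) := by
    rcases eq_or_ne ((j₀:ℕ)) 0 with h | h
    · rw [if_pos h, abs_zero, h, Ssin_zero, mul_zero, mul_zero]
    · rw [if_neg h]
      have hlt : (j₀:ℕ)-1 < 2*Λ+1 := by omega
      have hext : extv Λ v ((j₀:ℕ)-1) = v ⟨(j₀:ℕ)-1, hlt⟩ := by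
        rw [extv_def, dif_pos hlt]
      rw [hext, abs_mul,
        abs_of_nonneg (div_nonneg (bcoef_nonneg k _) (by norm_num) : (0:ℝ) ≤ bcoef k ((Λ:ℤ) - ((j₀:ℕ)-1)) / 2)]
      have hb : bcoef k ((Λ:ℤ) - ((j₀:ℕ)-1)) ≤ B := bcoef_le hkpos (by omega) (by omega)
      have hv' : |v ⟨(j₀:ℕ)-1, hlt⟩| ≤ r * Ssin Λ (j₀:ℕ) := by
        have := hle ⟨(j₀:ℕ)-1, hlt⟩
        have hco : ((⟨(j₀:ℕ)-1, hlt⟩ : Fin (2*Λ+1)) : ℕ) + 1 = (j₀:ℕ) := by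
          simp; omega
        rw [hW] at this
        simpa [hco] using this
      exact mul_le_mul (by linarith) hv' (abs_nonneg _) (by linarith)
  have hmain : |α| * |v j₀| ≤ B * c * |v j₀| := by
    have h1 : |α| * |v j₀| = |(XLam Λ k).mulVec v j₀| := by
      rw [← abs_mul, heq]
    rw [h1, mulVec_XLam]
    calc |bcoef k ((Λ:ℤ) - (j₀:ℕ)) / 2 * extv Λ v ((j₀:ℕ)+1)
          + (if (j₀:ℕ) = 0 then (0:ℝ)
             else bcoef k ((Λ:ℤ) - ((j₀:ℕ)-1)) / 2 * extv Λ v ((j₀:ℕ)-1))|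
        ≤ |bcoef k ((Λ:ℤ) - (j₀:ℕ)) / 2 * extv Λ v ((j₀:ℕ)+1)|
          + |(if (j₀:ℕ) = 0 then (0:ℝ)
             else bcoef k ((Λ:ℤ) - ((j₀:ℕ)-1)) / 2 * extv Λ v ((j₀:ℕ)-1))| := abs_add_le _ _
      _ ≤ B / 2 * (r * Ssin Λ ((j₀:ℕ)+2)) + B / 2 * (r * Ssin Λ (j₀:ℕ)) := add_le_add hA1 hA2
      _ = B / 2 * r * (Ssin Λ (j₀:ℕ) + Ssin Λ ((j₀:ℕ)+2)) := by ring
      _ = B / 2 * r * (2 * c * Ssin Λ ((j₀:ℕ)+1)) := by rw [Ssin_rec]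
      _ = B * c * (r * W j₀) := by rw [hW]; ring
      _ = B * c * |v j₀| := by rw [← hvj₀]
  have : |α| ≤ B * c := le_of_mul_le_mul_right (by linarith [hmain]) hvj₀pos
  calc α ≤ |α| := le_abs_self α
    _ ≤ B * c := this

theorem stmt_8 (Λ : ℕ) (hΛ : 0 < Λ) (k : ℝ) (hk : (Λ : ℝ)^2 * ((Λ : ℝ) + 1)^2 ≤ k)
    (α₁ : ℝ)
    (hα₁ : IsGreatest {α : ℝ | Module.End.HasEigenvalue (Matrix.toLin' (XLam Λ k)) α} α₁) :
    Real.cos (Real.pi / (2 * Λ + 2)) ≤ α₁ ∧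
      α₁ ≤ Real.sqrt (1 + (Λ : ℝ) * ((Λ : ℝ) - 1) / k) * Real.cos (Real.pi / (2 * Λ + 2)) := by
  have hΛ1 : (1:ℝ) ≤ (Λ:ℝ) := by exact_mod_cast hΛ
  have hkpos : 0 < k := by nlinarith
  exact ⟨lower_bound Λ hΛ k hkpos α₁ hα₁, upper_bound Λ hΛ k hkpos α₁ hα₁.1⟩
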